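/- Let K > 0, C ≠ 0 and f̃ be real numbers, and suppose Z > 0 satisfies 3Z⁴ + 4Z³ = 3K² + 4K^{3/2} + 72C·f̃. Define g = (Z³ − K^{3/2})/(9C) − f̃. Then K² + 12C·(f̃ − g) = Z⁴ ≥ 0 and K^{3/2} + 9C·(f̃ + g) = ( K² + 12C·(f̃ − g) )^{3/4}. -/

import Mathlib

/-- Solution of the boundary (jump-condition) system (4.59) for the reflected
wave at the vacuum–crystal interface in the decoupled case. -/
theorem jump_condition_solution
    (K C ftil Z : ℝ) (hK : 0 < K) (hC : C ≠ 0) (hZ : 0 < Z)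
    (heq : 3 * Z ^ 4 + 4 * Z ^ 3 = 3 * K ^ 2 + 4 * K ^ ((3:ℝ)/2) + 72 * C * ftil) :
    let g := (Z ^ 3 - K ^ ((3:ℝ)/2)) / (9 * C) - ftil
    K ^ 2 + 12 * C * (ftil - g) = Z ^ 4 ∧ (0:ℝ) ≤ Z ^ 4 ∧
      K ^ ((3:ℝ)/2) + 9 * C * (ftil + g) =
        (K ^ 2 + 12 * C * (ftil - g)) ^ ((3:ℝ)/4) := by
  intro g
  have hC9 : (9 : ℝ) * C ≠ 0 := by exact mul_ne_zero (by norm_num) hC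
  have h1 : K ^ 2 + 12 * C * (ftil - g) = Z ^ 4 := by
    show K ^ 2 + 12 * C * (ftil - ((Z ^ 3 - K ^ ((3:ℝ)/2)) / (9 * C) - ftil)) = Z ^ 4
    field_simp
    linear_combination (-3) * heq
  refine ⟨h1, by positivity, ?_⟩
  have h2 : K ^ ((3:ℝ)/2) + 9 * C * (ftil + g) = Z ^ 3 := by
    show K ^ ((3:ℝ)/2) + 9 * C * (ftil + ((Z ^ 3 - K ^ ((3:ℝ)/2)) / (9 * C) - ftil)) = Z ^ 3
    field_simp
    ring
  rw [h1, h2]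
  rw [show Z ^ 4 = Z ^ ((4:ℕ):ℝ) from (Real.rpow_natCast Z 4).symm,
    ← Real.rpow_mul hZ.le]
  norm_num
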